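/- Let a₁,…,a_r ∈ ℝⁿ be unit vectors with Σ_i a_i a_iᵀ ⪯ σ·Id and |⟨a_i,a_j⟩| ≤ ρ for i ≠ j, and let b₁,…,b_r ∈ ℝⁿ be unit vectors. If Σ_{i,j} ⟨a_i, b_j⟩³ ≥ (1 − ρσ)·r, then Σ_{i,j} ⟨a_i, b_j⟩⁴ ≥ (1 − ρσ² − 2ρσ)·r. -/

import Mathlib

open Matrix

lemma dp_sum {n r : ℕ} (x : Fin n → ℝ) (f : Fin r → Fin n → ℝ) :
    x ⬝ᵥ (∑ i, f i) = ∑ i, x ⬝ᵥ f i := by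
  simp only [dotProduct, Finset.sum_apply, Finset.mul_sum]
  exact Finset.sum_comm

lemma sum_dp {n r : ℕ} (x : Fin n → ℝ) (f : Fin r → Fin n → ℝ) :
    (∑ i, f i) ⬝ᵥ x = ∑ i, f i ⬝ᵥ x := by
  simp only [dotProduct, Finset.sum_apply, Finset.sum_mul]
  exact Finset.sum_comm

lemma sum_mv {n r : ℕ} (f : Fin r → Matrix (Fin n) (Fin n) ℝ) (x : Fin n → ℝ) :
    (∑ i, f i) *ᵥ x = ∑ i, f i *ᵥ x := by
  ext k
  simp only [Matrix.mulVec, dotProduct, Finset.sum_apply, Matrix.sum_apply, Finset.sum_mul]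
  exact Finset.sum_comm

lemma vmv_mulVec {n : ℕ} (u v x : Fin n → ℝ) :
    vecMulVec u v *ᵥ x = (v ⬝ᵥ x) • u := by
  ext k
  simp only [Matrix.mulVec, Matrix.vecMulVec_apply, dotProduct, Pi.smul_apply, smul_eq_mul]
  rw [Finset.sum_mul]
  exact Finset.sum_congr rfl fun l _ => by ring

/-- For `(σ,ρ)`-incoherent unit vectors `a₁,…,a_r` and unit vectors `b₁,…,b_r`,
if `Σ_{i,j} ⟨aᵢ,bⱼ⟩³ ≥ (1 − ρσ)·r` then
`Σ_{i,j} ⟨aᵢ,bⱼ⟩⁴ ≥ (1 − ρσ² − 2ρσ)·r`. -/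
theorem stmt_8 {n r : ℕ} (σ ρ : ℝ) (hσ : 1 ≤ σ) (hρ : 0 < ρ)
    (a b : Fin r → (Fin n → ℝ))
    (haunit : ∀ i, a i ⬝ᵥ a i = 1)
    (hbunit : ∀ j, b j ⬝ᵥ b j = 1)
    (hPSD : (σ • (1 : Matrix (Fin n) (Fin n) ℝ) -
      ∑ i, vecMulVec (a i) (a i)).PosSemidef)
    (hρbound : ∀ i j, i ≠ j → |a i ⬝ᵥ a j| ≤ ρ)
    (h : (1 - ρ * σ) * r ≤ ∑ i, ∑ j, (a i ⬝ᵥ b j) ^ 3) :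
    (1 - ρ * σ ^ 2 - 2 * ρ * σ) * r ≤ ∑ i, ∑ j, (a i ⬝ᵥ b j) ^ 4 := by
  set c : Fin r → Fin r → ℝ := fun i j => a i ⬝ᵥ b j with hc
  -- Step 1: ∑ᵢ c i j ^ 2 ≤ σ for each j
  have hS : ∀ j, ∑ i, (c i j) ^ 2 ≤ σ := by
    intro j
    have h0 := hPSD.dotProduct_mulVec_nonneg (b j)
    rw [star_trivial] at h0
    have hmv : (σ • (1 : Matrix (Fin n) (Fin n) ℝ) - ∑ i, vecMulVec (a i) (a i)) *ᵥ b j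
        = σ • b j - ∑ i, (c i j) • a i := by
      rw [Matrix.sub_mulVec, Matrix.smul_mulVec, Matrix.one_mulVec,
        sum_mv]
      congr 1
      exact Finset.sum_congr rfl fun i _ => by
        rw [vmv_mulVec]
    rw [hmv, dotProduct_sub, dotProduct_smul, dp_sum] at h0
    have h1 : ∀ i : Fin r, b j ⬝ᵥ ((c i j) • a i) = (c i j) ^ 2 := by
      intro i
      rw [dotProduct_smul, smul_eq_mul, dotProduct_comm]
      ring
    rw [Finset.sum_congr rfl fun i _ => h1 i, smul_eq_mul, hbunit j, mul_one] at h0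
    linarith
  have hSnn : ∀ j, (0:ℝ) ≤ ∑ i, (c i j) ^ 2 :=
    fun j => Finset.sum_nonneg fun i _ => sq_nonneg _
  -- Step 2: per-j bound ∑ᵢ c³ ≤ ½(1 + ρσ² + ∑ᵢ c⁴)
  have key : ∀ j, ∑ i, (c i j) ^ 3 ≤
      (1 + ρ * σ ^ 2 + ∑ i, (c i j) ^ 4) / 2 := by
    intro j
    set v : Fin n → ℝ := ∑ i, ((c i j) ^ 2) • a i with hv
    have hvb : v ⬝ᵥ b j = ∑ i, (c i j) ^ 3 := by
      rw [hv, sum_dp]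
      exact Finset.sum_congr rfl fun i _ => by
        rw [smul_dotProduct, smul_eq_mul]; ring
    have hvv : v ⬝ᵥ v = ∑ i, ∑ i', (c i j)^2 * (c i' j)^2 * (a i ⬝ᵥ a i') := by
      rw [hv, sum_dp]
      refine Finset.sum_congr rfl fun i _ => ?_
      rw [smul_dotProduct, dp_sum, smul_eq_mul, Finset.mul_sum]
      exact Finset.sum_congr rfl fun i' _ => by
        rw [dotProduct_smul, smul_eq_mul]; ring
    -- bound v ⬝ᵥ v
    have hvvle : v ⬝ᵥ v ≤ (∑ i, (c i j) ^ 4) + ρ * σ ^ 2 := by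
      rw [hvv]
      have hsplit : ∀ i : Fin r, ∑ i', (c i j)^2 * (c i' j)^2 * (a i ⬝ᵥ a i')
          = (c i j)^4 + ∑ i' ∈ Finset.univ.erase i,
              (c i j)^2 * (c i' j)^2 * (a i ⬝ᵥ a i') := by
        intro i
        rw [← Finset.add_sum_erase _ _ (Finset.mem_univ i), haunit i]
        ring_nf
      rw [Finset.sum_congr rfl fun i _ => hsplit i, Finset.sum_add_distrib]
      have hoff : ∑ i, ∑ i' ∈ Finset.univ.erase i,
          (c i j)^2 * (c i' j)^2 * (a i ⬝ᵥ a i') ≤ ρ * σ ^ 2 := by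
        have h1 : ∀ i : Fin r, ∑ i' ∈ Finset.univ.erase i,
            (c i j)^2 * (c i' j)^2 * (a i ⬝ᵥ a i')
            ≤ ρ * ((c i j)^2 * ∑ i', (c i' j)^2) := by
          intro i
          calc ∑ i' ∈ Finset.univ.erase i, (c i j)^2 * (c i' j)^2 * (a i ⬝ᵥ a i')
              ≤ ∑ i' ∈ Finset.univ.erase i, ρ * ((c i j)^2 * (c i' j)^2) := by
                refine Finset.sum_le_sum fun i' hi' => ?_
                have hne : i ≠ i' := fun e => (Finset.mem_erase.1 hi').1 e.symm
                have := hρbound i i' hne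
                have habs : (a i ⬝ᵥ a i') ≤ ρ := (abs_le.1 this).2
                have hlo : -ρ ≤ (a i ⬝ᵥ a i') := (abs_le.1 this).1
                nlinarith [sq_nonneg (c i j), sq_nonneg (c i' j),
                  mul_nonneg (sq_nonneg (c i j)) (sq_nonneg (c i' j))]
            _ ≤ ρ * ((c i j)^2 * ∑ i', (c i' j)^2) := by
                rw [← Finset.mul_sum, ← Finset.mul_sum]
                refine mul_le_mul_of_nonneg_left ?_ hρ.le
                refine mul_le_mul_of_nonneg_left ?_ (sq_nonneg _)
                exact Finset.sum_le_sum_of_subset_of_nonneg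
                  (Finset.erase_subset _ _) (fun i' _ _ => sq_nonneg _)
        calc ∑ i, ∑ i' ∈ Finset.univ.erase i,
              (c i j)^2 * (c i' j)^2 * (a i ⬝ᵥ a i')
            ≤ ∑ i, ρ * ((c i j)^2 * ∑ i', (c i' j)^2) :=
              Finset.sum_le_sum fun i _ => h1 i
          _ = ρ * ((∑ i, (c i j)^2) * (∑ i', (c i' j)^2)) := by
              rw [← Finset.mul_sum, ← Finset.sum_mul]
          _ ≤ ρ * σ ^ 2 := by
              have h2 : (∑ i, (c i j)^2) * (∑ i', (c i' j)^2) ≤ σ * σ :=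
                mul_le_mul (hS j) (hS j) (hSnn j) (by linarith [hS j, hSnn j])
              nlinarith
      linarith
    -- AM-GM: 2 (v ⬝ᵥ b j) ≤ v ⬝ᵥ v + b j ⬝ᵥ b j
    have hamgm : 2 * (v ⬝ᵥ b j) ≤ v ⬝ᵥ v + b j ⬝ᵥ b j := by
      have h0 : (0:ℝ) ≤ (v - b j) ⬝ᵥ (v - b j) :=
        Finset.sum_nonneg fun k _ => mul_self_nonneg _
      rw [sub_dotProduct, dotProduct_sub, dotProduct_sub,
        dotProduct_comm (b j) v] at h0
      linarith
    rw [hvb] at hamgm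
    rw [hbunit j] at hamgm
    linarith
  -- Step 3: sum over j and conclude
  have hsum : ∑ i, ∑ j, (c i j) ^ 3 ≤
      (r : ℝ) * ((1 + ρ * σ ^ 2) / 2) + (∑ i, ∑ j, (c i j) ^ 4) / 2 := by
    rw [Finset.sum_comm (f := fun i j => (c i j) ^ 3),
      Finset.sum_comm (f := fun i j => (c i j) ^ 4)]
    calc ∑ j, ∑ i, (c i j) ^ 3 ≤ ∑ j : Fin r, (1 + ρ * σ ^ 2 + ∑ i, (c i j) ^ 4) / 2 :=
          Finset.sum_le_sum fun j _ => key j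
      _ = ∑ j : Fin r, ((1 + ρ * σ ^ 2) / 2 + (∑ i, (c i j) ^ 4) / 2) :=
          Finset.sum_congr rfl fun j _ => by ring
      _ = (r : ℝ) * ((1 + ρ * σ ^ 2) / 2) + (∑ j, ∑ i, (c i j) ^ 4) / 2 := by
          rw [Finset.sum_add_distrib, Finset.sum_const, Finset.card_univ,
            Fintype.card_fin, nsmul_eq_mul, ← Finset.sum_div]
  linarith
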